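/- Let X be a compact Hausdorff space. A homeomorphism h ∈ H(X) is chain transitive if and only if for every open set U ⊆ X with U ≠ ∅ and U ≠ X, we have h[cl(U)] ⊄ U (where cl(U) is the closure of U). -/

import Mathlib

open Set TopologicalSpace

noncomputable section

/-- `h` is chain transitive: for all points `a, b` and every open cover `𝒰` of the
space, there is a `𝒰`-chain `x_0 = a, x_1, …, x_n = b` (with `n ≥ 1`), i.e. for
each `i < n` there is `U ∈ 𝒰` with `h(x_i) ∈ U` and `x_{i+1} ∈ U`. -/
def ChainTransitive {X : Type*} [TopologicalSpace X] (h : X → X) : Prop :=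
  ∀ a b : X, ∀ 𝒰 : Set (Set X), (∀ U ∈ 𝒰, IsOpen U) → ⋃₀ 𝒰 = univ →
    ∃ n : ℕ, 1 ≤ n ∧ ∃ x : ℕ → X, x 0 = a ∧ x n = b ∧
      ∀ i < n, ∃ U ∈ 𝒰, h (x i) ∈ U ∧ x (i + 1) ∈ U

/-- For a compact Hausdorff space `X`, a homeomorphism `h` of `X` is chain
transitive iff `h[cl(U)] ⊄ U` for every open `U` with `U ≠ ∅` and `U ≠ X`. -/
theorem stmt_5 (X : Type*) [TopologicalSpace X] [CompactSpace X] [T2Space X]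
    (h : X ≃ₜ X) :
    ChainTransitive ⇑h ↔
      ∀ U : Set X, IsOpen U → U ≠ ∅ → U ≠ univ → ¬(⇑h '' closure U ⊆ U) := by
  constructor
  · intro hct U hU hne hnuniv hsub
    obtain ⟨a, ha⟩ := nonempty_iff_ne_empty.mpr hne
    obtain ⟨b, hb⟩ : ∃ b, b ∉ U := by
      by_contra hc
      push_neg at hc
      exact hnuniv (eq_univ_iff_forall.mpr hc)
    have hKcl : IsClosed (⇑h '' closure U) :=
      (isClosed_closure.isCompact.image h.continuous).isClosed
    obtain ⟨n, hn, x, hx0, hxn, hchain⟩ := hct a b {U, (⇑h '' closure U)ᶜ}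
      (by
        rintro V hV
        rcases hV with rfl | rfl
        · exact hU
        · exact hKcl.isOpen_compl)
      (by
        apply eq_univ_of_forall; intro y
        by_cases hy : y ∈ U
        · exact ⟨U, Or.inl rfl, hy⟩
        · exact ⟨_, Or.inr rfl, fun hy' => hy (hsub hy')⟩)
    have key : ∀ i ≤ n, x i ∈ U := by
      intro i hi
      induction i with
      | zero => rw [hx0]; exact ha
      | succ k ih =>
        have hk : k < n := Nat.lt_of_succ_le hi
        have hxk := ih hk.le
        obtain ⟨V, hV, hhV, hV1⟩ := hchain k hk
        rcases hV with rfl | rfl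
        · exact hV1
        · exact absurd ⟨x k, subset_closure hxk, rfl⟩ hhV
    exact hb (hxn ▸ key n le_rfl)
  · intro hyp a b 𝒰 hopen hcover
    set A := {y : X | ∃ n : ℕ, 1 ≤ n ∧ ∃ x : ℕ → X, x 0 = a ∧ x n = y ∧
      ∀ i < n, ∃ U ∈ 𝒰, h (x i) ∈ U ∧ x (i + 1) ∈ U} with hAdef
    -- absorption: if `y ∈ A` and `h y ∈ U ∈ 𝒰`, then `U ⊆ A`
    have absorb : ∀ U ∈ 𝒰, ∀ y ∈ A, h y ∈ U → U ⊆ A := by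
      rintro U hU y ⟨n, hn, x, hx0, hxn, hch⟩ hhy z hz
      refine ⟨n + 1, le_trans hn (Nat.le_succ n), fun i => if i = n + 1 then z else x i,
        ?_, ?_, ?_⟩
      · have : (0 : ℕ) ≠ n + 1 := by omega
        simp [this, hx0]
      · simp
      · intro i hi
        by_cases him : i = n
        · have e1 : i ≠ n + 1 := by omega
          have e2 : i + 1 = n + 1 := by omega
          exact ⟨U, hU, by simpa [e1, him, hxn] using hhy, by simp [e2, hz]⟩
        · have hi1 : i < n := by omega
          have e1 : i ≠ n + 1 := by omega
          have e2 : i + 1 ≠ n + 1 := by omega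
          obtain ⟨V, hV, hv1, hv2⟩ := hch i hi1
          exact ⟨V, hV, by simpa [e1] using hv1, by simpa [e2, him] using hv2⟩
    -- each point of A has a neighborhood in 𝒰 contained in A
    have lastU : ∀ y ∈ A, ∃ U ∈ 𝒰, y ∈ U ∧ U ⊆ A := by
      rintro y ⟨n, hn, x, hx0, hxn, hch⟩
      obtain ⟨m, rfl⟩ : ∃ m, n = m + 1 := ⟨n - 1, by omega⟩
      obtain ⟨U, hU𝒰, hhU, hU1⟩ := hch m (Nat.lt_succ_self m)
      refine ⟨U, hU𝒰, hxn ▸ hU1, ?_⟩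
      intro z hz
      refine ⟨m + 1, hn, fun i => if i = m + 1 then z else x i, ?_, ?_, ?_⟩
      · have : (0 : ℕ) ≠ m + 1 := by omega
        simp [this, hx0]
      · simp
      · intro i hi
        have e1 : i ≠ m + 1 := by omega
        by_cases him : i = m
        · have e2 : i + 1 = m + 1 := by omega
          exact ⟨U, hU𝒰, by simpa [e1, him] using hhU, by simp [e2, hz]⟩
        · have hi1 : i < m := by omega
          have e2 : i + 1 ≠ m + 1 := by omega
          obtain ⟨V, hV, hv1, hv2⟩ := hch i (by omega)
          exact ⟨V, hV, by simpa [e1] using hv1, by simpa [e2, him] using hv2⟩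
    have hAopen : IsOpen A := by
      rw [isOpen_iff_forall_mem_open]
      intro y hy
      obtain ⟨U, hU, hyU, hUA⟩ := lastU y hy
      exact ⟨U, hUA, hopen U hU, hyU⟩
    have hAne : (h a : X) ∈ A := by
      have : (h a : X) ∈ ⋃₀ 𝒰 := hcover ▸ mem_univ _
      obtain ⟨U, hU, haU⟩ := this
      refine ⟨1, le_rfl, fun i => if i = 0 then a else h a, by simp, by simp, ?_⟩
      intro i hi
      have : i = 0 := by omega
      subst this
      exact ⟨U, hU, by simpa using haU, by simpa using haU⟩
    have habs : ⇑h '' closure A ⊆ A := by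
      rintro _ ⟨z, hz, rfl⟩
      have : (h z : X) ∈ ⋃₀ 𝒰 := hcover ▸ mem_univ _
      obtain ⟨U, hU, hzU⟩ := this
      have hpre : IsOpen (⇑h ⁻¹' U) := (hopen U hU).preimage h.continuous
      obtain ⟨y, hy1, hy2⟩ := mem_closure_iff.mp hz _ hpre hzU
      exact absorb U hU y hy2 hy1 hzU
    have hAuniv : A = univ := by
      by_contra hne
      exact hyp A hAopen (nonempty_iff_ne_empty.mp ⟨_, hAne⟩) hne habs
    have hbA : b ∈ A := hAuniv ▸ mem_univ b
    exact hbA
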